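/- arXiv:1602.00327 — 4 statements merged into one kernel-verified Lean document; each statement's English description precedes it below -/
import Mathlib

section
/- Let S be a numerical semigroup with multiplicity e, and let s ∈ S with a maximal representation s = Σ a_j n_j (so Σ a_j = ord(s)). If s' = Σ b_j n_j with 0 ≤ b_j ≤ a_j for all j, then ord(s') = Σ b_j. -/
open Set

/-- A numerical semigroup: a cofinite submonoid of ℕ. -/
def IsNumSgp (S : Set ℕ) : Prop :=
  0 ∈ S ∧ (∀ a ∈ S, ∀ b ∈ S, a + b ∈ S) ∧ Sᶜ.Finite

/-- The maximal ideal `M = S \ {0}`. -/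
def MS (S : Set ℕ) : Set ℕ := S \ {0}

/-- The multiplicity `e` of `S`, the smallest nonzero element. -/
noncomputable def mult (S : Set ℕ) : ℕ := sInf (MS S)

/-- `nM S h` is the set of sums of `h` elements of `M = S \ {0}` (with `nM S 0 = {0}`). -/
def nM (S : Set ℕ) : ℕ → Set ℕ
  | 0 => {0}
  | k + 1 => {x | ∃ a ∈ MS S, ∃ b ∈ nM S k, x = a + b}

/-- The order of `s`: the largest `h` with `s ∈ hM`. -/
noncomputable def ordS (S : Set ℕ) (s : ℕ) : ℕ := sSup {h | s ∈ nM S h}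

/-- The Apéry set of `S` with respect to the multiplicity `e`:
elements `s ∈ S` with `s - e ∉ S`. -/
def Ap (S : Set ℕ) : Set ℕ := {s ∈ S | ∀ t ∈ S, t + mult S ≠ s}

/-- Elements of the Apéry set of order `k`. -/
def ApK (S : Set ℕ) (k : ℕ) : Set ℕ := {s ∈ Ap S | ordS S s = k}

/-- `C_k = {s ∈ S : ord s = k and s - e ∉ (k-1)M}`. -/
def CK (S : Set ℕ) (k : ℕ) : Set ℕ :=
  {s ∈ S | ordS S s = k ∧ ∀ t ∈ nM S (k - 1), t + mult S ≠ s}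

/-- `D_k = {s ∈ S : ord s = k-1 and ord (s+e) > k}`. -/
def DK (S : Set ℕ) (k : ℕ) : Set ℕ :=
  {s ∈ S | ordS S s = k - 1 ∧ k < ordS S (s + mult S)}

/-- The Hilbert function of `R = k[[S]]`: `H(0) = 1`, `H(n) = |nM \ (n+1)M|`. -/
noncomputable def HF (S : Set ℕ) (n : ℕ) : ℕ := (nM S n \ nM S (n + 1)).ncard

/-- The set of minimal generators of `S`. -/
def MinGens (S : Set ℕ) : Set ℕ :=
  MS S \ {x | ∃ a ∈ MS S, ∃ b ∈ MS S, x = a + b}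

/-- `a` is a maximal representation of `s`: a finitely supported coefficient
function on the minimal generators with `Σ aⱼ nⱼ = s` and `Σ aⱼ = ord s`. -/
def IsMaxRep (S : Set ℕ) (s : ℕ) (a : ℕ →₀ ℕ) : Prop :=
  (↑a.support : Set ℕ) ⊆ MinGens S ∧
  (a.sum fun n c => c * n) = s ∧
  (a.sum fun _ c => c) = ordS S s

/-- `|Supp(s)|`: the maximal number of distinct minimal generators appearing
in a maximal representation of `s`. -/
noncomputable def SuppCard (S : Set ℕ) (s : ℕ) : ℕ :=
  sSup {q | ∃ a : ℕ →₀ ℕ, IsMaxRep S s a ∧ a.support.card = q}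

/-- The Frobenius number of `S`. -/
noncomputable def Frob (S : Set ℕ) : ℕ := sSup Sᶜ


lemma nM_ge {S : Set ℕ} : ∀ (h : ℕ) {x : ℕ}, x ∈ nM S h → h ≤ x
  | 0, x, _ => Nat.zero_le x
  | h+1, x, hx => by
    obtain ⟨c, hc, d, hd, rfl⟩ := hx
    have h1 : 1 ≤ c := Nat.one_le_iff_ne_zero.2 hc.2
    have h2 := nM_ge h hd
    omega

lemma nM_add {S : Set ℕ} : ∀ (h : ℕ) {k x y : ℕ},
    x ∈ nM S h → y ∈ nM S k → x + y ∈ nM S (h + k)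
  | 0, k, x, y, hx, hy => by
    simp only [nM, Set.mem_singleton_iff] at hx; subst hx; simpa using hy
  | h+1, k, x, y, hx, hy => by
    obtain ⟨c, hc, d, hd, rfl⟩ := hx
    have : c + d + y = c + (d + y) := by ring
    rw [this, show h + 1 + k = (h + k) + 1 by ring]
    exact ⟨c, hc, d + y, nM_add h hd hy, rfl⟩

lemma nM_smul {S : Set ℕ} {n : ℕ} (hn : n ∈ MS S) : ∀ (k : ℕ), k * n ∈ nM S k
  | 0 => by simp [nM]
  | k+1 => by
    rw [show (k+1) * n = n + k * n by ring]
    exact ⟨n, hn, k * n, nM_smul hn k, rfl⟩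

lemma sum_mul_add (b c : ℕ →₀ ℕ) :
    ((b + c).sum fun n k => k * n) = (b.sum fun n k => k * n) + c.sum fun n k => k * n :=
  Finsupp.sum_add_index' (fun _ => zero_mul _) (fun n c1 c2 => add_mul c1 c2 n)

lemma sum_cnt_add (b c : ℕ →₀ ℕ) :
    ((b + c).sum fun _ k => k) = (b.sum fun _ k => k) + c.sum fun _ k => k :=
  Finsupp.sum_add_index' (fun _ => rfl) (fun _ _ _ => rfl)

lemma rep_mem_nM {S : Set ℕ} (c : ℕ →₀ ℕ) (hc : (↑c.support : Set ℕ) ⊆ MS S) :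
    (c.sum fun n k => k * n) ∈ nM S (c.sum fun _ k => k) := by
  induction c using Finsupp.induction with
  | zero => simp [nM]
  | single_add n k f hnf hk ih =>
    have hfn : f n = 0 := Finsupp.notMem_support_iff.1 hnf
    have hsub : (↑f.support : Set ℕ) ⊆ MS S := by
      intro x hx
      apply hc
      simp only [Finset.mem_coe, Finsupp.mem_support_iff, Finsupp.add_apply] at *
      intro h; omega
    have hn : n ∈ MS S := by
      apply hc
      simp only [Finset.mem_coe, Finsupp.mem_support_iff, Finsupp.add_apply,
        Finsupp.single_eq_same, hfn]
      omega
    rw [sum_mul_add, sum_cnt_add, Finsupp.sum_single_index rfl,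
      Finsupp.sum_single_index (zero_mul n)]
    exact nM_add _ (nM_smul hn k) (ih hsub)

lemma ordS_bddAbove {S : Set ℕ} (s : ℕ) : BddAbove {h | s ∈ nM S h} :=
  ⟨s, fun h hh => nM_ge h hh⟩

lemma le_ordS {S : Set ℕ} {s h : ℕ} (hh : s ∈ nM S h) : h ≤ ordS S s :=
  le_csSup (ordS_bddAbove s) hh

theorem stmt0 (S : Set ℕ) (hS : IsNumSgp S) (s : ℕ) (hs : s ∈ S)
    (a : ℕ →₀ ℕ) (ha : IsMaxRep S s a) (b : ℕ →₀ ℕ) (hb : b ≤ a) :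
    ordS S (b.sum fun n c => c * n) = b.sum fun _ c => c := by
  obtain ⟨hsupp, hsum, hord⟩ := ha
  have hms : (↑a.support : Set ℕ) ⊆ MS S := fun x hx => (hsupp hx).1
  have hble : ∀ x, b x ≤ a x := hb
  have hbms : (↑b.support : Set ℕ) ⊆ MS S := by
    intro x hx
    apply hms
    simp only [Finset.mem_coe, Finsupp.mem_support_iff] at *
    have := hble x
    omega
  have hmem : (b.sum fun n c => c * n) ∈ nM S (b.sum fun _ c => c) := rep_mem_nM b hbms
  have hge : (b.sum fun _ c => c) ≤ ordS S (b.sum fun n c => c * n) := le_ordS hmem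
  refine le_antisymm ?_ hge
  set s' := b.sum fun n c => c * n with hs'
  have hne : {h | s' ∈ nM S h}.Nonempty := ⟨_, hmem⟩
  have hattain : s' ∈ nM S (ordS S s') := Nat.sSup_mem hne (ordS_bddAbove s')
  have hab : b + (a - b) = a := by
    ext n
    simp only [Finsupp.add_apply, Finsupp.tsub_apply]
    have := hble n
    omega
  have hrmem : ((a - b).sum fun n c => c * n) ∈ nM S ((a - b).sum fun _ c => c) := by
    apply rep_mem_nM
    intro x hx
    apply hms
    simp only [Finset.mem_coe, Finsupp.mem_support_iff, Finsupp.tsub_apply] at *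
    omega
  have hmul := sum_mul_add b (a - b)
  have hcnt := sum_cnt_add b (a - b)
  rw [hab] at hmul hcnt
  have hsmem : s ∈ nM S (ordS S s' + (a - b).sum fun _ c => c) := by
    have h1 := nM_add (ordS S s') hattain hrmem
    have heq : s' + ((a - b).sum fun n c => c * n) = s := by rw [← hsum, hmul]
    rwa [heq] at h1
  have hle := le_ordS hsmem
  rw [← hord] at hle
  omega
end

section
/- Let R = k[[S]] be a numerical semigroup ring with maximal ideal m. For every k ≥ 2, H_R(k) − H_R(k−1) = |C_k| − |D_k|, where H_R is the Hilbert function of the associated graded ring of R. -/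
open Set

section Aux

variable {S : Set ℕ}

lemma mem_nM_one {s : ℕ} (hs : s ∈ MS S) : s ∈ nM S 1 :=
  ⟨s, hs, 0, rfl, (Nat.add_zero s).symm⟩

lemma nM_one : nM S 1 = MS S := by
  ext x
  constructor
  · rintro ⟨a, ha, b, hb, rfl⟩
    have : b = 0 := hb
    subst this
    simpa using ha
  · exact mem_nM_one

lemma mem_nM_ge {k x : ℕ} (hx : x ∈ nM S k) : k ≤ x := by
  induction k generalizing x with
  | zero => omega
  | succ n ih =>
    obtain ⟨a, ha, b, hb, rfl⟩ := hx
    have h1 := ih hb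
    have h2 : a ≠ 0 := by simpa using ha.2
    omega

lemma MS_nonempty (hS : IsNumSgp S) : (MS S).Nonempty := by
  have h1 : S.Infinite := by
    have := hS.2.2.infinite_compl
    rwa [compl_compl] at this
  exact (h1.diff (Set.finite_singleton 0)).nonempty

lemma mult_mem (hS : IsNumSgp S) : mult S ∈ MS S :=
  Nat.sInf_mem (MS_nonempty hS)

lemma add_mem_MS (hS : IsNumSgp S) {a b : ℕ} (ha : a ∈ MS S) (hb : b ∈ S) :
    a + b ∈ MS S := by
  refine ⟨hS.2.1 a ha.1 b hb, ?_⟩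
  have : a ≠ 0 := by simpa using ha.2
  simp only [Set.mem_singleton_iff]
  omega

lemma nM_subset_S (hS : IsNumSgp S) : ∀ k, 1 ≤ k → nM S k ⊆ S := by
  intro k hk
  induction k with
  | zero => omega
  | succ n ih =>
    rintro x ⟨a, ha, b, hb, rfl⟩
    rcases Nat.eq_zero_or_pos n with h | h
    · subst h
      have : b = 0 := hb
      subst this
      simpa using ha.1
    · exact hS.2.1 a ha.1 b (ih h hb)

lemma nM_succ_subset (hS : IsNumSgp S) : ∀ k, 1 ≤ k → nM S (k + 1) ⊆ nM S k := by
  intro k hk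
  induction k with
  | zero => omega
  | succ n ih =>
    rintro x ⟨a, ha, b, hb, rfl⟩
    rcases Nat.eq_zero_or_pos n with h | h
    · subst h
      rw [nM_one] at hb ⊢
      exact add_mem_MS hS ha hb.1
    · exact ⟨a, ha, b, ih h hb, rfl⟩

lemma nM_subset_of_le (hS : IsNumSgp S) {i j : ℕ} (hj : 1 ≤ j) (hij : j ≤ i) :
    nM S i ⊆ nM S j := by
  induction i with
  | zero => omega
  | succ n ih =>
    rcases Nat.eq_or_lt_of_le hij with h | h
    · subst h; exact fun _ h => h
    · exact fun x hx => ih (by omega) (nM_succ_subset hS n (by omega) hx)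

lemma bddAbove_ordSet (s : ℕ) : BddAbove {h | s ∈ nM S h} :=
  ⟨s, fun _ hh => mem_nM_ge hh⟩

lemma ordS_eq_of (hS : IsNumSgp S) {s k : ℕ} (h1 : s ∈ nM S k)
    (h2 : s ∉ nM S (k + 1)) : ordS S s = k := by
  unfold ordS
  have hne : {h | s ∈ nM S h}.Nonempty := ⟨k, h1⟩
  apply le_antisymm
  · apply csSup_le hne
    intro h hh
    by_contra hc
    exact h2 (nM_subset_of_le hS (by omega) (by omega) hh)
  · exact le_csSup (bddAbove_ordSet s) h1

lemma ordS_ge {s k : ℕ} (h1 : s ∈ nM S k) : k ≤ ordS S s :=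
  le_csSup (bddAbove_ordSet s) h1

lemma mem_nM_ordS (hS : IsNumSgp S) {s : ℕ} (hs : s ∈ S) : s ∈ nM S (ordS S s) := by
  apply Nat.sSup_mem _ (bddAbove_ordSet s)
  rcases Nat.eq_zero_or_pos s with h | h
  · exact ⟨0, by simp [nM, h]⟩
  · exact ⟨1, mem_nM_one ⟨hs, by simp; omega⟩⟩

lemma not_mem_nM_ordS_succ {s : ℕ} :
    s ∉ nM S (ordS S s + 1) := by
  intro h
  have := ordS_ge h
  omega

lemma mem_S_of_gt_frob (hS : IsNumSgp S) {n : ℕ} (h : Frob S < n) : n ∈ S := by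
  by_contra hn
  have : n ≤ sSup Sᶜ := le_csSup hS.2.2.bddAbove hn
  exact absurd this (by unfold Frob at h; omega)

lemma mult_mul_add_mem (hS : IsNumSgp S) {r : ℕ} (hr : r ∈ MS S) :
    ∀ j, mult S * j + r ∈ nM S (j + 1) := by
  intro j
  induction j with
  | zero => simpa using mem_nM_one hr
  | succ n ih =>
    exact ⟨mult S, mult_mem hS, mult S * n + r, ih, by ring⟩

lemma mem_nM_of_gt (hS : IsNumSgp S) {s k : ℕ} (h : Frob S + mult S * k < s) :
    s ∈ nM S (k + 1) := by
  have he : mult S ∈ MS S := mult_mem hS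
  set r := s - mult S * k with hrdef
  have hr1 : Frob S < r := by omega
  have hrS : r ∈ S := mem_S_of_gt_frob hS hr1
  have hrM : r ∈ MS S := ⟨hrS, by simp; omega⟩
  have := mult_mul_add_mem hS hrM k
  have hs : s = mult S * k + r := by omega
  rwa [← hs] at this

lemma diff_finite (hS : IsNumSgp S) (k : ℕ) :
    (nM S k \ nM S (k + 1)).Finite := by
  apply (Set.finite_Iic (Frob S + mult S * k)).subset
  rintro s ⟨_, hs2⟩
  simp only [Set.mem_Iic]
  by_contra hc
  exact hs2 (mem_nM_of_gt hS (by omega))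

end Aux

theorem stmt2 (S : Set ℕ) (hS : IsNumSgp S) (k : ℕ) (hk : 2 ≤ k) :
    (HF S k : ℤ) - (HF S (k - 1) : ℤ) =
      ((CK S k).ncard : ℤ) - ((DK S k).ncard : ℤ) := by
  set e := mult S with he
  set A := nM S (k - 1) \ nM S k with hA
  set B := nM S k \ nM S (k + 1) with hB
  have hk1 : k - 1 + 1 = k := by omega
  have hAfin : A.Finite := by
    have := diff_finite hS (k - 1)
    rwa [hk1] at this
  have hBfin : B.Finite := diff_finite hS k
  have heM : e ∈ MS S := mult_mem hS
  -- C ⊆ B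
  have hCB : CK S k ⊆ B := by
    rintro s ⟨hsS, hord, _⟩
    refine ⟨?_, ?_⟩
    · have := mem_nM_ordS hS hsS; rwa [hord] at this
    · have := not_mem_nM_ordS_succ (S := S) (s := s); rwa [hord] at this
  -- D ⊆ A
  have hDA : DK S k ⊆ A := by
    rintro s ⟨hsS, hord, _⟩
    refine ⟨?_, ?_⟩
    · have := mem_nM_ordS hS hsS; rwa [hord] at this
    · have := not_mem_nM_ordS_succ (S := S) (s := s); rwa [hord, hk1] at this
  -- key bijection
  have key : B \ CK S k = (fun t => t + e) '' (A \ DK S k) := by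
    ext s
    constructor
    · rintro ⟨⟨hs1, hs2⟩, hsC⟩
      have hsS : s ∈ S := nM_subset_S hS k (by omega) hs1
      have hord : ordS S s = k := ordS_eq_of hS hs1 hs2
      have : ¬ (∀ t ∈ nM S (k - 1), t + mult S ≠ s) := by
        intro hall
        exact hsC ⟨hsS, hord, hall⟩
      push_neg at this
      obtain ⟨t, ht, hts⟩ := this
      have htS : t ∈ S := nM_subset_S hS (k - 1) (by omega) ht
      have htk : t ∉ nM S k := by
        intro hc
        apply hs2
        refine ⟨e, heM, t, hc, ?_⟩
        omega
      have htord : ordS S t = k - 1 := by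
        apply ordS_eq_of hS ht
        rwa [hk1]
      refine ⟨t, ⟨⟨ht, htk⟩, ?_⟩, hts⟩
      rintro ⟨_, _, hlt⟩
      rw [hts, hord] at hlt
      omega
    · rintro ⟨t, ⟨⟨ht1, ht2⟩, htD⟩, rfl⟩
      have htS : t ∈ S := nM_subset_S hS (k - 1) (by omega) ht1
      have htord : ordS S t = k - 1 := by
        apply ordS_eq_of hS ht1
        rwa [hk1]
      have htek : t + e ∈ nM S k := by
        rw [← hk1]
        exact ⟨e, heM, t, ht1, by omega⟩
      have htele : ordS S (t + e) ≤ k := by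
        by_contra hc
        push_neg at hc
        exact htD ⟨htS, htord, by rw [← he]; exact hc⟩
      have hteord : ordS S (t + e) = k :=
        le_antisymm htele (ordS_ge htek)
      refine ⟨⟨htek, ?_⟩, ?_⟩
      · have := not_mem_nM_ordS_succ (S := S) (s := t + e)
        rwa [hteord] at this
      · rintro ⟨_, _, hall⟩
        exact hall t ht1 rfl
  have hinj : Function.Injective (fun t : ℕ => t + e) := fun a b h => by
    simpa using h
  have hcard : (B \ CK S k).ncard = (A \ DK S k).ncard := by
    rw [key, Set.ncard_image_of_injective _ hinj]
  have hBsum : (B \ CK S k).ncard + (CK S k).ncard = B.ncard :=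
    Set.ncard_diff_add_ncard_of_subset hCB hBfin
  have hAsum : (A \ DK S k).ncard + (DK S k).ncard = A.ncard :=
    Set.ncard_diff_add_ncard_of_subset hDA hAfin
  have hHFk : HF S k = B.ncard := rfl
  have hHFk1 : HF S (k - 1) = A.ncard := by
    unfold HF
    rw [hk1]
  rw [hHFk, hHFk1]
  omega
end

section
/- Let S be a numerical semigroup with multiplicity e and d = max{ord(σ) : σ ∈ Ap}. If g ∈ D_k and ord(g+e) = k + p, then p ≤ d − 1. -/
open Set

namespace Stmt6Aux

variable {S : Set ℕ}

lemma MS_nonempty (hS : IsNumSgp S) : (MS S).Nonempty := by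
  have h1 : S.Infinite := by
    have := Set.Finite.infinite_compl hS.2.2
    rwa [compl_compl] at this
  have h2 : (MS S).Infinite := h1.diff (Set.finite_singleton 0)
  exact h2.nonempty

lemma mult_mem (hS : IsNumSgp S) : mult S ∈ MS S := Nat.sInf_mem (MS_nonempty hS)

lemma mult_pos (hS : IsNumSgp S) : 0 < mult S := by
  have := mult_mem hS
  simp only [MS, Set.mem_diff, Set.mem_singleton_iff] at this
  omega

lemma mult_le {m : ℕ} (hm : m ∈ MS S) : mult S ≤ m := Nat.sInf_le hm

lemma nM_subset (hS : IsNumSgp S) : ∀ h s, s ∈ nM S h → s ∈ S := by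
  intro h
  induction h with
  | zero => intro s hs; simp only [nM, Set.mem_singleton_iff] at hs; subst hs; exact hS.1
  | succ n ih =>
    rintro s ⟨a, ha, b, hb, rfl⟩
    exact hS.2.1 a ha.1 b (ih b hb)

lemma nM_ge : ∀ h s, s ∈ nM S h → h * mult S ≤ s := by
  intro h
  induction h with
  | zero => intro s hs; simp
  | succ n ih =>
    rintro s ⟨a, ha, b, hb, rfl⟩
    have h1 := mult_le ha
    have h2 := ih b hb
    nlinarith

lemma ord_bdd (hS : IsNumSgp S) (s : ℕ) : BddAbove {h | s ∈ nM S h} := by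
  refine ⟨s, fun h hh => ?_⟩
  have := nM_ge h s hh
  have := mult_pos hS
  nlinarith

lemma le_ord (hS : IsNumSgp S) {h s : ℕ} (hs : s ∈ nM S h) : h ≤ ordS S s :=
  le_csSup (ord_bdd hS s) hs

lemma ord_le (hS : IsNumSgp S) (s : ℕ) : ordS S s ≤ s := by
  apply csSup_le'
  intro h hh
  have h1 := nM_ge h s hh
  have h2 := mult_pos hS
  nlinarith

lemma mem_nM_one (hS : IsNumSgp S) {s : ℕ} (hs : s ∈ S) (hs0 : s ≠ 0) : s ∈ nM S 1 := by
  exact ⟨s, ⟨hs, hs0⟩, 0, rfl, by omega⟩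

lemma mem_nM_ord (hS : IsNumSgp S) {s : ℕ} (hs : s ∈ S) : s ∈ nM S (ordS S s) := by
  have hne : ({h | s ∈ nM S h}).Nonempty := by
    by_cases hs0 : s = 0
    · exact ⟨0, by simp [nM, hs0]⟩
    · exact ⟨1, mem_nM_one hS hs hs0⟩
  exact Nat.sSup_mem hne (ord_bdd hS s)

lemma nM_add_mem : ∀ a b x y, x ∈ nM S a → y ∈ nM S b → x + y ∈ nM S (a + b) := by
  intro a
  induction a with
  | zero =>
    intro b x y hx hy
    simp only [nM, Set.mem_singleton_iff] at hx
    subst hx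
    simpa using hy
  | succ n ih =>
    rintro b x y ⟨m, hm, r, hr, rfl⟩ hy
    have he : n + 1 + b = (n + b) + 1 := by omega
    rw [he]
    exact ⟨m, hm, r + y, ih b r y hr hy, by omega⟩

lemma nM_split : ∀ a b s, s ∈ nM S (a + b) → ∃ x ∈ nM S a, ∃ y ∈ nM S b, s = x + y := by
  intro a
  induction a with
  | zero =>
    intro b s hs
    exact ⟨0, rfl, s, by simpa using hs, by omega⟩
  | succ n ih =>
    intro b s hs
    have : s ∈ nM S (n + b + 1) := by
      convert hs using 2; omega
    obtain ⟨m, hm, r, hr, rfl⟩ := this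
    obtain ⟨x, hx, y, hy, rfl⟩ := ih b r hr
    exact ⟨m + x, ⟨m, hm, x, hx, rfl⟩, y, hy, by omega⟩

lemma ap_image_bdd (hS : IsNumSgp S) : BddAbove (ordS S '' Ap S) := by
  refine ⟨sSup Sᶜ + mult S, ?_⟩
  rintro _ ⟨s, hs, rfl⟩
  have h1 : ordS S s ≤ s := ord_le hS s
  by_cases hle : s ≤ mult S
  · omega
  · push_neg at hle
    have hsc : s - mult S ∈ Sᶜ := by
      intro hcon
      exact hs.2 (s - mult S) hcon (by omega)
    have : s - mult S ≤ sSup Sᶜ := le_csSup hS.2.2.bddAbove hsc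
    omega

end Stmt6Aux

theorem stmt6 (S : Set ℕ) (hS : IsNumSgp S) (k p : ℕ) (hk : 2 ≤ k)
    (g : ℕ) (hg : g ∈ DK S k) (hord : ordS S (g + mult S) = k + p) :
    p ≤ sSup (ordS S '' Ap S) - 1 := by
  open Stmt6Aux in
  obtain ⟨hgS, hordg, hlt⟩ := hg
  rw [hord] at hlt
  have hp : 1 ≤ p := by omega
  have he := Stmt6Aux.mult_pos hS
  have hgeS : g + mult S ∈ S := hS.2.1 g hgS _ (Stmt6Aux.mult_mem hS).1
  have hmem : g + mult S ∈ nM S (k + p) := by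
    rw [← hord]; exact Stmt6Aux.mem_nM_ord hS hgeS
  have hmem' : g + mult S ∈ nM S ((p + 1) + (k - 1)) := by
    convert hmem using 2; omega
  obtain ⟨u, hu, v, hv, huv⟩ := Stmt6Aux.nM_split (p + 1) (k - 1) _ hmem'
  have huAp : u ∈ Ap S := by
    refine ⟨Stmt6Aux.nM_subset hS _ _ hu, ?_⟩
    intro t ht hte
    have hge := Stmt6Aux.nM_ge (p + 1) u hu
    have h2 : 2 * mult S ≤ (p + 1) * mult S := by
      apply Nat.mul_le_mul_right; omega
    have ht0 : t ≠ 0 := by omega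
    have hgtv : g = t + v := by omega
    have hk2 : g ∈ nM S (1 + (k - 1)) :=
      hgtv ▸ Stmt6Aux.nM_add_mem 1 (k - 1) t v (Stmt6Aux.mem_nM_one hS ht ht0) hv
    have : 1 + (k - 1) ≤ ordS S g := Stmt6Aux.le_ord hS hk2
    omega
  have hordu : p + 1 ≤ ordS S u := Stmt6Aux.le_ord hS hu
  have hd : ordS S u ≤ sSup (ordS S '' Ap S) :=
    le_csSup (Stmt6Aux.ap_image_bdd hS) ⟨u, huAp, rfl⟩
  omega
end

section
/- Let S be a numerical semigroup with multiplicity e, let k ≥ 2, and let x_1 ≠ x_2 be elements of D_k with maximal representations x_1 + e = Σ α_i n_i and x_2 + e = Σ β_i n_i having the same support. Then there exist indices i, j with α_i > β_i and α_j < β_j. -/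
open Set

lemma mem_nM_le (S : Set ℕ) : ∀ (h : ℕ) (x : ℕ), x ∈ nM S h → h ≤ x := by
  intro h
  induction h with
  | zero => intro x _; exact Nat.zero_le x
  | succ n ih =>
    rintro x ⟨u, hu, v, hv, rfl⟩
    have h1 : 1 ≤ u := Nat.one_le_iff_ne_zero.mpr hu.2
    have := ih v hv
    omega

lemma bddAbove_nM_set (S : Set ℕ) (x : ℕ) : BddAbove {h | x ∈ nM S h} :=
  ⟨x, fun h hh => mem_nM_le S h x hh⟩

lemma nM_add_single (S : Set ℕ) (n : ℕ) (hn : n ∈ MS S) :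
    ∀ (m x h : ℕ), x ∈ nM S h → x + m * n ∈ nM S (h + m) := by
  intro m
  induction m with
  | zero => intro x h hx; simpa using hx
  | succ p ih =>
    intro x h hx
    have : x + p * n ∈ nM S (h + p) := ih x h hx
    have : n + (x + p * n) ∈ nM S (h + p + 1) := ⟨n, hn, x + p * n, this, rfl⟩
    have heq : x + (p + 1) * n = n + (x + p * n) := by ring
    rw [heq]
    exact this

lemma nM_add_finsupp (S : Set ℕ) (c : ℕ →₀ ℕ) (hc : ∀ i ∈ c.support, i ∈ MS S) :
    ∀ x h, x ∈ nM S h →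
      x + c.sum (fun n m => m * n) ∈ nM S (h + c.sum (fun _ m => m)) := by
  induction c using Finsupp.induction with
  | zero => intro x h hx; simpa using hx
  | single_add n m f hn hm ih =>
    intro x h hx
    have hnM : n ∈ MS S := by
      apply hc
      rw [Finsupp.mem_support_iff]
      simp [Finsupp.notMem_support_iff.mp hn, hm]
    have hf : ∀ i ∈ f.support, i ∈ MS S := by
      intro i hi
      apply hc
      rw [Finsupp.support_add_eq, Finsupp.support_single_ne_zero n hm]
      · exact Finset.mem_union_right _ hi
      · rw [Finsupp.support_single_ne_zero n hm]
        simp [Finset.disjoint_singleton_left, hn]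
    have h1 : (Finsupp.single n m + f).sum (fun n m => m * n)
        = m * n + f.sum (fun n m => m * n) := by
      rw [Finsupp.sum_add_index' (by intro i; simp) (by intro i b₁ b₂; ring)]
      rw [Finsupp.sum_single_index (by simp)]
    have h2 : (Finsupp.single n m + f).sum (fun _ m => m)
        = m + f.sum (fun _ m => m) := by
      rw [Finsupp.sum_add_index' (by intro i; simp) (by intro i b₁ b₂; ring)]
      rw [Finsupp.sum_single_index (by simp)]
    rw [h1, h2]
    have step1 := ih hf x h hx
    have step2 := nM_add_single S n hnM m _ _ step1
    have e1 : x + (m * n + f.sum fun n m => m * n)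
        = x + f.sum (fun n m => m * n) + m * n := by ring
    have e2 : h + (m + f.sum fun _ m => m) = h + f.sum (fun _ m => m) + m := by ring
    rw [e1, e2]
    exact step2

lemma mem_nM_ord (S : Set ℕ) (hS : IsNumSgp S) (x : ℕ) (hx : x ∈ S) :
    x ∈ nM S (ordS S x) := by
  have hne : {h | x ∈ nM S h}.Nonempty := by
    rcases eq_or_ne x 0 with rfl | hx0
    · exact ⟨0, by simp [nM]⟩
    · exact ⟨1, ⟨x, ⟨hx, hx0⟩, 0, rfl, by simp⟩⟩
  exact Nat.sSup_mem hne (bddAbove_nM_set S x)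

lemma key_half (S : Set ℕ) (hS : IsNumSgp S) (k : ℕ)
    (y₁ y₂ : ℕ) (h1 : y₁ ∈ DK S k) (h2 : y₂ ∈ DK S k) (hne : y₁ ≠ y₂)
    (a b : ℕ →₀ ℕ) (ha : IsMaxRep S (y₁ + mult S) a)
    (hb : IsMaxRep S (y₂ + mult S) b) : ∃ i, b i < a i := by
  by_contra hcon
  push_neg at hcon
  have hle : a ≤ b := Finsupp.le_def.mpr hcon
  set c : ℕ →₀ ℕ := b - a with hc
  have hab : a + c = b := add_tsub_cancel_of_le hle
  have hsum1 : b.sum (fun n m => m * n) = a.sum (fun n m => m * n)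
      + c.sum (fun n m => m * n) := by
    rw [← hab, Finsupp.sum_add_index' (by intro i; simp) (by intro i b₁ b₂; ring)]
  have hsum2 : b.sum (fun _ m => m) = a.sum (fun _ m => m) + c.sum (fun _ m => m) := by
    rw [← hab, Finsupp.sum_add_index' (by intro i; simp) (by intro i b₁ b₂; ring)]
  -- y₂ = y₁ + c.sum
  have heq : y₂ = y₁ + c.sum (fun n m => m * n) := by
    have h1' := ha.2.1
    have h2' := hb.2.1
    omega
  -- c ≠ 0 so its coefficient sum is ≥ 1
  have hcne : c ≠ 0 := by
    intro h0
    rw [h0, add_zero] at hab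
    rw [hab] at ha
    have : y₁ + mult S = y₂ + mult S := by rw [← ha.2.1, ← hb.2.1]
    exact hne (by omega)
  have hcsum : 1 ≤ c.sum (fun _ m => m) := by
    rcases Nat.eq_zero_or_pos (c.sum fun _ m => m) with h0 | h
    · exfalso
      apply hcne
      ext i
      by_cases hi : i ∈ c.support
      · have := (Finset.sum_eq_zero_iff.mp h0) i hi
        simpa using this
      · simpa using Finsupp.notMem_support_iff.mp hi
    · exact h
  -- support of c ⊆ MS S
  have hcsupp : ∀ i ∈ c.support, i ∈ MS S := by
    intro i hi
    have hbi : i ∈ b.support := by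
      rw [Finsupp.mem_support_iff] at hi ⊢
      simp only [hc, Finsupp.tsub_apply] at hi
      omega
    have := hb.1 hbi
    exact this.1
  -- y₁ ∈ nM S (k - 1)
  obtain ⟨hy1S, hord1, _⟩ := h1
  obtain ⟨hy2S, hord2, _⟩ := h2
  have hy1 : y₁ ∈ nM S (k - 1) := by
    have := mem_nM_ord S hS y₁ hy1S
    rwa [hord1] at this
  have hy2 : y₂ ∈ nM S (k - 1 + c.sum (fun _ m => m)) := by
    rw [heq]
    exact nM_add_finsupp S c hcsupp y₁ (k - 1) hy1
  have : k - 1 + c.sum (fun _ m => m) ≤ ordS S y₂ :=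
    le_csSup (bddAbove_nM_set S y₂) hy2
  omega

theorem stmt8 (S : Set ℕ) (hS : IsNumSgp S) (k : ℕ) (hk : 2 ≤ k)
    (x₁ x₂ : ℕ) (h1 : x₁ ∈ DK S k) (h2 : x₂ ∈ DK S k) (hne : x₁ ≠ x₂)
    (a b : ℕ →₀ ℕ) (ha : IsMaxRep S (x₁ + mult S) a)
    (hb : IsMaxRep S (x₂ + mult S) b) (hsupp : a.support = b.support) :
    (∃ i, b i < a i) ∧ (∃ j, a j < b j) :=
  ⟨key_half S hS k x₁ x₂ h1 h2 hne a b ha hb,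
   key_half S hS k x₂ x₁ h2 h1 hne.symm b a hb ha⟩
end
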